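/- In the two-group Gaussian setting with ℓ(x) = exp(βᵀx), X₀ | A = a ~ N(μ_a, Σ₀) with common covariance Σ₀, prior π_a, and Q^w(a) = π_a M_a(w)/Σ_{a'} π_{a'} M_{a'}(w): if βᵀμ₁ > βᵀμ₂ then w ↦ Q^w(1) is strictly increasing in w ≥ 0 and Q^w(1) → 1 as w → ∞. -/

import Mathlib

open MeasureTheory Matrix Filter

/-- The multivariate Gaussian measure `N(m, S)` on `ℝ^d`, defined through its Lebesgue
density. -/
noncomputable def multiGaussian (d : ℕ) (m : Fin d → ℝ) (S : Matrix (Fin d) (Fin d) ℝ) :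
    Measure (Fin d → ℝ) :=
  volume.withDensity fun x =>
    ENNReal.ofReal ((2 * Real.pi) ^ (-(d : ℝ) / 2) * S.det ^ (-(1 : ℝ) / 2) *
      Real.exp (-(1 / 2) * ((x - m) ⬝ᵥ (S⁻¹ *ᵥ (x - m)))))

/-- Two-group Gaussian setting with `ℓ(x) = exp(βᵀx)`, common covariance `Σ₀`, and
guided group marginal `Q^w(a) = π_a M_a(w) / Σ_{a'} π_{a'} M_{a'}(w)`: if
`βᵀμ₀ > βᵀμ₁` then `w ↦ Q^w(0)` is strictly increasing on `w ≥ 0` and `Q^w(0) → 1` as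
`w → ∞` — guidance bias grows monotonically with the guidance scale and the favored
group eventually dominates. -/
lemma contQF (d : ℕ) (A : Matrix (Fin d) (Fin d) ℝ) :
    Continuous fun x : Fin d → ℝ => x ⬝ᵥ (A *ᵥ x) := by
  simp only [dotProduct, mulVec, dotProduct]
  fun_prop

lemma qf_lower (d : ℕ) (A : Matrix (Fin d) (Fin d) ℝ) (hA : A.PosDef) :
    ∃ c > 0, ∀ x : Fin d → ℝ, c * ∑ i, x i ^ 2 ≤ x ⬝ᵥ (A *ᵥ x) := by
  rcases Nat.eq_zero_or_pos d with hd | hd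
  · subst hd
    exact ⟨1, one_pos, fun x => by simp [dotProduct]⟩
  haveI : Nonempty (Fin d) := ⟨⟨0, hd⟩⟩
  have hsph : (Metric.sphere (0 : Fin d → ℝ) 1).Nonempty :=
    NormedSpace.sphere_nonempty.2 zero_le_one
  obtain ⟨z, hz, hmin⟩ := (isCompact_sphere (0 : Fin d → ℝ) 1).exists_isMinOn hsph
    (contQF d A).continuousOn
  have hz1 : ‖z‖ = 1 := by simpa using hz
  have hz0 : z ≠ 0 := by intro h; simp [h] at hz1
  set c₀ : ℝ := z ⬝ᵥ (A *ᵥ z) with hc₀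
  have hc₀pos : 0 < c₀ := by simpa using hA.dotProduct_mulVec_pos hz0
  have key : ∀ x : Fin d → ℝ, c₀ * ‖x‖ ^ 2 ≤ x ⬝ᵥ (A *ᵥ x) := by
    intro x
    rcases eq_or_ne x 0 with rfl | hx
    · simp
    · have hnx : (0:ℝ) < ‖x‖ := norm_pos_iff.2 hx
      have hy : (‖x‖⁻¹ • x) ∈ Metric.sphere (0 : Fin d → ℝ) 1 := by
        simp [norm_smul, abs_of_pos (inv_pos.2 hnx), inv_mul_cancel₀ hnx.ne']
      have h1 : c₀ ≤ (‖x‖⁻¹ • x) ⬝ᵥ (A *ᵥ (‖x‖⁻¹ • x)) := hmin hy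
      have h2 : (‖x‖⁻¹ • x) ⬝ᵥ (A *ᵥ (‖x‖⁻¹ • x)) = ‖x‖⁻¹ ^ 2 * (x ⬝ᵥ (A *ᵥ x)) := by
        rw [mulVec_smul, dotProduct_smul, smul_dotProduct]
        ring_nf
      rw [h2] at h1
      have := mul_le_mul_of_nonneg_left h1 (sq_nonneg ‖x‖)
      calc c₀ * ‖x‖ ^ 2 = ‖x‖ ^ 2 * c₀ := by ring
        _ ≤ ‖x‖ ^ 2 * (‖x‖⁻¹ ^ 2 * (x ⬝ᵥ (A *ᵥ x))) := this
        _ = x ⬝ᵥ (A *ᵥ x) := by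
            field_simp
  refine ⟨c₀ / d, div_pos hc₀pos (by exact_mod_cast hd), fun x => ?_⟩
  have hb : ∑ i, x i ^ 2 ≤ d * ‖x‖ ^ 2 := by
    calc ∑ i, x i ^ 2 ≤ ∑ _i : Fin d, ‖x‖ ^ 2 := by
          refine Finset.sum_le_sum fun i _ => ?_
          have := norm_le_pi_norm x i
          rw [Real.norm_eq_abs] at this
          nlinarith [abs_nonneg (x i), norm_nonneg x, sq_abs (x i)]
        _ = d * ‖x‖ ^ 2 := by simp [Finset.sum_const, mul_comm]
  calc c₀ / d * ∑ i, x i ^ 2 ≤ c₀ / d * (d * ‖x‖ ^ 2) := by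
        apply mul_le_mul_of_nonneg_left hb (le_of_lt (div_pos hc₀pos (by exact_mod_cast hd)))
      _ = c₀ * ‖x‖ ^ 2 := by
        field_simp
      _ ≤ _ := key x

lemma integ (d : ℕ) (A : Matrix (Fin d) (Fin d) ℝ) (hA : A.PosDef) (b : Fin d → ℝ) :
    Integrable (fun x : Fin d → ℝ =>
      Real.exp (b ⬝ᵥ x + -(1/2) * (x ⬝ᵥ (A *ᵥ x)))) volume := by
  obtain ⟨c, hc, hq⟩ := qf_lower d A hA
  set K : ℝ := ∑ i, (b i) ^ 2 / c with hK
  have hbound : ∀ x : Fin d → ℝ,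
      b ⬝ᵥ x + -(1/2) * (x ⬝ᵥ (A *ᵥ x)) ≤ K + ∑ i, -(c/4) * (x i) ^ 2 := by
    intro x
    have h1 : b ⬝ᵥ x ≤ ∑ i, ((c/4) * (x i)^2 + (b i)^2 / c) := by
      rw [dotProduct]
      refine Finset.sum_le_sum fun i _ => ?_
      have hb2 : b i ^ 2 / c * c = b i ^ 2 := div_mul_cancel₀ _ hc.ne'
      nlinarith [sq_nonneg (c * x i - 2 * b i), hc, hb2]
    have h2 : c * ∑ i, (x i)^2 ≤ x ⬝ᵥ (A *ᵥ x) := hq x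
    have : ∑ i, ((c/4) * (x i)^2 + (b i)^2 / c)
        = K + (c/4) * ∑ i, (x i)^2 := by
      rw [Finset.sum_add_distrib, Finset.mul_sum, hK]; ring
    rw [this] at h1
    have h3 : ∑ i, -(c/4) * (x i) ^ 2 = -((c/4) * ∑ i, (x i)^2) := by
      rw [Finset.mul_sum, ← Finset.sum_neg_distrib]
      simp [neg_mul]
    rw [h3]
    nlinarith [Finset.sum_nonneg (fun i (_ : i ∈ Finset.univ) => sq_nonneg (x i))]
  have hmaj : Integrable (fun x : Fin d → ℝ =>
      Real.exp K * ∏ i, Real.exp (-(c/4) * (x i)^2)) volume := by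
    refine Integrable.const_mul ?_ _
    exact Integrable.fintype_prod (f := fun _ t => Real.exp (-(c/4) * t^2))
      (fun i => integrable_exp_neg_mul_sq (by positivity))
  refine hmaj.mono' ?_ ?_
  · apply Continuous.aestronglyMeasurable
    apply Real.continuous_exp.comp
    have h1 : Continuous fun x : Fin d → ℝ => b ⬝ᵥ x := by
      simp only [dotProduct]; fun_prop
    exact h1.add (continuous_const.mul (contQF d A))
  · filter_upwards with x
    rw [Real.norm_eq_abs, abs_of_pos (Real.exp_pos _), ← Real.exp_sum, ← Real.exp_add]
    exact Real.exp_le_exp.2 (hbound x)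

noncomputable def baseG (d : ℕ) (β : Fin d → ℝ) (S0 : Matrix (Fin d) (Fin d) ℝ) (w : ℝ) : ℝ :=
  ∫ y : Fin d → ℝ, Real.exp (w * (β ⬝ᵥ y)) *
    ((2 * Real.pi) ^ (-(d : ℝ) / 2) * S0.det ^ (-(1 : ℝ) / 2) *
      Real.exp (-(1 / 2) * (y ⬝ᵥ (S0⁻¹ *ᵥ y))))

lemma baseG_integrable (d : ℕ) (β : Fin d → ℝ) (S0 : Matrix (Fin d) (Fin d) ℝ)
    (hS0 : S0.PosDef) (w : ℝ) :
    Integrable (fun y : Fin d → ℝ => Real.exp (w * (β ⬝ᵥ y)) *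
      ((2 * Real.pi) ^ (-(d : ℝ) / 2) * S0.det ^ (-(1 : ℝ) / 2) *
        Real.exp (-(1 / 2) * (y ⬝ᵥ (S0⁻¹ *ᵥ y))))) volume := by
  have h := (integ d S0⁻¹ hS0.inv (w • β)).const_mul
    ((2 * Real.pi) ^ (-(d : ℝ) / 2) * S0.det ^ (-(1 : ℝ) / 2))
  refine h.congr (Eventually.of_forall fun y => ?_)
  simp only [smul_dotProduct, smul_eq_mul, Real.exp_add]
  ring

lemma baseG_pos (d : ℕ) (β : Fin d → ℝ) (S0 : Matrix (Fin d) (Fin d) ℝ)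
    (hS0 : S0.PosDef) (w : ℝ) : 0 < baseG d β S0 w := by
  have hcst : (0:ℝ) < (2 * Real.pi) ^ (-(d : ℝ) / 2) * S0.det ^ (-(1 : ℝ) / 2) := by
    have h2π : (0:ℝ) < 2 * Real.pi := by positivity
    have hdet : (0:ℝ) < S0.det := hS0.det_pos
    positivity
  rw [baseG, integral_pos_iff_support_of_nonneg]
  · have : Function.support (fun y : Fin d → ℝ => Real.exp (w * (β ⬝ᵥ y)) *
        ((2 * Real.pi) ^ (-(d : ℝ) / 2) * S0.det ^ (-(1 : ℝ) / 2) *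
          Real.exp (-(1 / 2) * (y ⬝ᵥ (S0⁻¹ *ᵥ y))))) = Set.univ := by
      ext y
      simp only [Function.mem_support, Set.mem_univ, iff_true]
      positivity
    rw [this]
    exact isOpen_univ.measure_pos volume Set.univ_nonempty
  · intro y
    positivity
  · exact baseG_integrable d β S0 hS0 w

lemma M_eq (d : ℕ) (β : Fin d → ℝ) (S0 : Matrix (Fin d) (Fin d) ℝ)
    (hS0 : S0.PosDef) (m : Fin d → ℝ) (w : ℝ) :
    (∫ z, Real.exp (β ⬝ᵥ z) ^ w ∂(multiGaussian d m S0))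
      = Real.exp (w * (β ⬝ᵥ m)) * baseG d β S0 w := by
  have hcst : (0:ℝ) ≤ (2 * Real.pi) ^ (-(d : ℝ) / 2) * S0.det ^ (-(1 : ℝ) / 2) := by
    have h2π : (0:ℝ) < 2 * Real.pi := by positivity
    have hdet : (0:ℝ) < S0.det := hS0.det_pos
    positivity
  have hmeas : Measurable fun x : Fin d → ℝ =>
      Real.toNNReal ((2 * Real.pi) ^ (-(d : ℝ) / 2) * S0.det ^ (-(1 : ℝ) / 2) *
        Real.exp (-(1 / 2) * ((x - m) ⬝ᵥ (S0⁻¹ *ᵥ (x - m))))) := by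
    apply measurable_real_toNNReal.comp
    apply Continuous.measurable
    exact continuous_const.mul
      (Real.continuous_exp.comp (continuous_const.mul
        ((contQF d S0⁻¹).comp (continuous_id.sub continuous_const))))
  rw [multiGaussian]
  simp_rw [ENNReal.ofReal]
  rw [integral_withDensity_eq_integral_smul hmeas]
  have step1 : (∫ x : Fin d → ℝ,
      Real.toNNReal ((2 * Real.pi) ^ (-(d : ℝ) / 2) * S0.det ^ (-(1 : ℝ) / 2) *
        Real.exp (-(1 / 2) * ((x - m) ⬝ᵥ (S0⁻¹ *ᵥ (x - m)))))
        • (Real.exp (β ⬝ᵥ x) ^ w))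
      = ∫ x : Fin d → ℝ, Real.exp (w * (β ⬝ᵥ m)) * (Real.exp (w * (β ⬝ᵥ (x - m))) *
        ((2 * Real.pi) ^ (-(d : ℝ) / 2) * S0.det ^ (-(1 : ℝ) / 2) *
          Real.exp (-(1 / 2) * ((x - m) ⬝ᵥ (S0⁻¹ *ᵥ (x - m)))))) := by
    refine integral_congr_ae (Eventually.of_forall fun x => ?_)
    have hx : β ⬝ᵥ x = β ⬝ᵥ (x - m) + β ⬝ᵥ m := by
      rw [← dotProduct_add]
      congr 1
      abel
    dsimp only
    rw [NNReal.smul_def, Real.coe_toNNReal _ (by positivity),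
      Real.rpow_def_of_pos (Real.exp_pos _), Real.log_exp, hx]
    rw [smul_eq_mul, add_mul, Real.exp_add]
    ring
  rw [step1, integral_const_mul]
  congr 1
  rw [baseG]
  exact (integral_sub_right_eq_self (fun y : Fin d → ℝ => Real.exp (w * (β ⬝ᵥ y)) *
    ((2 * Real.pi) ^ (-(d : ℝ) / 2) * S0.det ^ (-(1 : ℝ) / 2) *
      Real.exp (-(1 / 2) * (y ⬝ᵥ (S0⁻¹ *ᵥ y))))) m)


theorem two_group_bias_amplification
    (d : ℕ) (β : Fin d → ℝ) (μv : Fin 2 → Fin d → ℝ)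
    (S0 : Matrix (Fin d) (Fin d) ℝ) (hS0 : S0.PosDef)
    (pr : Fin 2 → ℝ) (hpr : ∀ a, 0 < pr a) (hsum : pr 0 + pr 1 = 1)
    (M : Fin 2 → ℝ → ℝ)
    (hM : ∀ a w, M a w = ∫ z, Real.exp (β ⬝ᵥ z) ^ w ∂(multiGaussian d (μv a) S0))
    (Q : ℝ → Fin 2 → ℝ)
    (hQ : ∀ w a, Q w a = pr a * M a w / (pr 0 * M 0 w + pr 1 * M 1 w))
    (hlt : β ⬝ᵥ μv 1 < β ⬝ᵥ μv 0) :
    StrictMonoOn (fun w => Q w 0) (Set.Ici 0)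
    ∧ Tendsto (fun w => Q w 0) atTop (nhds 1) := by

  have hMw : ∀ a w, M a w = Real.exp (w * (β ⬝ᵥ μv a)) * baseG d β S0 w := fun a w => by
    rw [hM, M_eq d β S0 hS0]
  set δ : ℝ := β ⬝ᵥ μv 1 - β ⬝ᵥ μv 0 with hδ
  have hδneg : δ < 0 := by simp [hδ]; linarith
  have hden : ∀ w : ℝ, 0 < pr 0 + pr 1 * Real.exp (w * δ) := fun w => by
    have := hpr 0; have := hpr 1; positivity
  have hQ0 : ∀ w : ℝ, Q w 0 = pr 0 / (pr 0 + pr 1 * Real.exp (w * δ)) := by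
    intro w
    have hG := baseG_pos d β S0 hS0 w
    have hE0 := Real.exp_pos (w * (β ⬝ᵥ μv 0))
    have hexp1 : Real.exp (w * (β ⬝ᵥ μv 1))
        = Real.exp (w * (β ⬝ᵥ μv 0)) * Real.exp (w * δ) := by
      rw [← Real.exp_add]; congr 1; rw [hδ]; ring
    rw [hQ, hMw, hMw, hexp1]
    rw [div_eq_div_iff]
    · ring
    · have := hpr 0; have := hpr 1; have := Real.exp_pos (w * δ); positivity
    · exact (hden w).ne'
  have hfun : (fun w => Q w 0) = fun w => pr 0 / (pr 0 + pr 1 * Real.exp (w * δ)) :=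
    funext hQ0
  rw [hfun]
  constructor
  · intro w1 _ w2 _ h12
    have hexp : Real.exp (w2 * δ) < Real.exp (w1 * δ) :=
      Real.exp_lt_exp.2 (by nlinarith)
    exact div_lt_div_of_pos_left (hpr 0) (hden w2)
      (by nlinarith [hpr 1])
  · have h1 : Tendsto (fun w : ℝ => w * δ) atTop atBot :=
      tendsto_id.atTop_mul_const_of_neg hδneg
    have h2 : Tendsto (fun w : ℝ => Real.exp (w * δ)) atTop (nhds 0) :=
      Real.tendsto_exp_atBot.comp h1
    have h3 : Tendsto (fun w : ℝ => pr 0 + pr 1 * Real.exp (w * δ)) atTop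
        (nhds (pr 0 + pr 1 * 0)) :=
      tendsto_const_nhds.add (tendsto_const_nhds.mul h2)
    have h4 : Tendsto (fun w : ℝ => pr 0 / (pr 0 + pr 1 * Real.exp (w * δ))) atTop
        (nhds (pr 0 / (pr 0 + pr 1 * 0))) :=
      tendsto_const_nhds.div h3 (by simpa using (hpr 0).ne')
    have : pr 0 / (pr 0 + pr 1 * 0) = 1 := by
      rw [mul_zero, add_zero, div_self (hpr 0).ne']
    rwa [this] at h4
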